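/- Let n ≥ 1 and m ≥ 2. Every congruence preserving function f : ℤ/nℤ → ℤ/mℤ is rat-polynomial of degree less than μ(m): there exist p < μ(m) and elements a_0, …, a_p ∈ ℤ/mℤ such that f(x) = Σ_{k=0}^{p} a_k · C(x, k) in ℤ/mℤ for every x ∈ {0, …, n−1}. -/

import Mathlib

open Polynomial fwdDiff fwdDiff_aux Finset


/-- `ulcm k` is the least common multiple of `1, 2, …, k`, with `ulcm 0 = 1`. -/
def ulcm (k : ℕ) : ℕ := (Finset.Icc 1 k).lcm id

/-- `mu m` is the largest prime power dividing `m`. -/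
def mu (m : ℕ) : ℕ := m.primeFactors.sup fun p => p ^ m.factorization p

/-- `f : ZMod n → ZMod m` is congruence preserving. -/
def CongPres (n m : ℕ) (f : ZMod n → ZMod m) : Prop :=
  ∀ d : ℕ, ∀ hd : d ∣ m, ∀ a b : ℕ, a < n → b < n → a ≡ b [MOD d] →
    ZMod.castHom hd (ZMod d) (f a) = ZMod.castHom hd (ZMod d) (f b)

/-- `CP n m` is the number of congruence preserving functions `ZMod n → ZMod m`. -/
noncomputable def CP (n m : ℕ) : ℕ := Nat.card {f : ZMod n → ZMod m // CongPres n m f}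

set_option linter.unusedVariables false

section Act
variable {R : Type*} [CommRing R]

noncomputable def pact (T : ℤ[X]) (f : ℕ → R) : ℕ → R := Polynomial.aeval (shiftₗ ℕ R 1) T f

lemma pact_mul (T U : ℤ[X]) (f : ℕ → R) : pact (T * U) f = pact T (pact U f) := by
  simp only [pact, map_mul, Module.End.mul_apply]

lemma pact_add (T U : ℤ[X]) (f : ℕ → R) : pact (T + U) f = pact T f + pact U f := by
  simp only [pact, map_add, LinearMap.add_apply]

lemma pact_sum {ι : Type*} (s : Finset ι) (g : ι → ℤ[X]) (f : ℕ → R) :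
    pact (∑ i ∈ s, g i) f = ∑ i ∈ s, pact (g i) f := by
  simp only [pact, map_sum, LinearMap.coe_sum, Finset.sum_apply]

lemma pact_X_pow (j : ℕ) (f : ℕ → R) (x : ℕ) : pact ((X : ℤ[X]) ^ j) f x = f (x + j) := by
  simp only [pact, map_pow, aeval_X]
  simpa using shiftₗ_pow_apply (1 : ℕ) f j x

lemma pact_natCast (c : ℕ) (f : ℕ → R) : pact ((c : ℤ[X])) f = c • f := by
  simp only [pact, map_natCast, Module.End.natCast_apply]

lemma pact_fwdDiff_pow (k : ℕ) (f : ℕ → R) :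
    pact (((X : ℤ[X]) - 1) ^ k) f = (fwdDiff (1:ℕ))^[k] f := by
  have h1 : (Polynomial.aeval (shiftₗ ℕ R 1)) ((X : ℤ[X]) - 1) = fwdDiffₗ ℕ R 1 := by
    rw [map_sub, aeval_X, map_one, shiftₗ, add_sub_cancel_right]
  simp only [pact, map_pow, h1]
  rw [← coe_fwdDiffₗ_pow]

lemma pact_preserve (I : Ideal R) (f : ℕ → R) (hf : ∀ x, f x ∈ I) (T : ℤ[X]) :
    ∀ x, pact T f x ∈ I := by
  induction T using Polynomial.induction_on' with
  | add p q hp hq => intro x; rw [pact_add]; exact I.add_mem (hp x) (hq x)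
  | monomial j a =>
    intro x
    have : (Polynomial.monomial j a : ℤ[X]) = C a * X ^ j := by
      rw [C_mul_X_pow_eq_monomial]
    rw [this, pact_mul]
    have hC : pact (C a : ℤ[X]) (pact ((X:ℤ[X])^j) f) = a • (pact ((X:ℤ[X])^j) f) := by
      simp only [pact, eq_intCast, map_intCast, Module.End.intCast_apply]
    rw [hC, Pi.smul_apply, pact_X_pow]
    rw [zsmul_eq_mul]
    exact I.mul_mem_left _ (hf _)

end Act

section PolyKey

/-- `(y-1)^p = y^p - 1 + p*(y-1)*g` for some `g`, for `p` prime. -/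
lemma sub_one_pow_prime {A : Type*} [CommRing A] {p : ℕ} (hp : p.Prime) (y : A) :
    ∃ g : A, (y - 1) ^ p = y ^ p - 1 + (p : A) * (y - 1) * g := by
  haveI : Fact p.Prime := ⟨hp⟩
  -- first in ℤ[X]
  have key : ∃ g0 : ℤ[X], ((X : ℤ[X]) - 1) ^ p = X ^ p - 1 + (p : ℤ[X]) * (X - 1) * g0 := by
    set t : ℤ[X] := ((X : ℤ[X]) - 1) ^ p - (X ^ p - 1) with ht
    have hdvd : (C (p : ℤ)) ∣ t := by
      rw [Polynomial.C_dvd_iff_dvd_coeff]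
      intro i
      have hmap : t.map (Int.castRingHom (ZMod p)) = 0 := by
        simp only [ht, Polynomial.map_sub, Polynomial.map_pow, Polynomial.map_one,
          Polynomial.map_X]
        rw [sub_pow_char]
        ring
      have h2 : ((t.coeff i : ℤ) : ZMod p) = 0 := by
        have := congrArg (fun q => Polynomial.coeff q i) hmap
        simpa [Polynomial.coeff_map] using this
      exact_mod_cast (ZMod.intCast_zmod_eq_zero_iff_dvd _ _).mp h2
    obtain ⟨u, hu⟩ := hdvd
    have heval : t.eval 1 = 0 := by
      simp only [ht, Polynomial.eval_sub, Polynomial.eval_pow, Polynomial.eval_one,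
        Polynomial.eval_X, sub_self, one_pow]
      rw [zero_pow hp.ne_zero]
      ring
    have hu1 : u.eval 1 = 0 := by
      have := heval
      rw [hu] at this
      simp only [Polynomial.eval_mul, Polynomial.eval_C] at this
      rcases mul_eq_zero.mp this with h | h
      · exact absurd h (by exact_mod_cast hp.ne_zero)
      · exact h
    have hroot : (X - C (1 : ℤ)) ∣ u := Polynomial.dvd_iff_isRoot.mpr hu1
    obtain ⟨g0, hg0⟩ := hroot
    refine ⟨g0, ?_⟩
    have : t = (p : ℤ[X]) * (X - 1) * g0 := by
      rw [hu, hg0, map_natCast, map_one]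
      ring
    rw [ht] at this
    linear_combination this
  obtain ⟨g0, hg0⟩ := key
  refine ⟨Polynomial.aeval y g0, ?_⟩
  have := congrArg (Polynomial.aeval y) hg0
  simpa only [map_pow, map_sub, map_add, map_mul, map_one, aeval_X, map_natCast] using this

end PolyKey

lemma mem_span_image_finset {A : Type*} [CommRing A] {s : Finset ℕ} {F : ℕ → A} {x : A}
    (hx : x ∈ Ideal.span (F '' ↑s)) : ∃ c : ℕ → A, x = ∑ i ∈ s, F i * c i := by
  induction hx using Submodule.span_induction with
  | mem y hy =>
    obtain ⟨i0, hi0, rfl⟩ := hy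
    refine ⟨fun i => if i = i0 then 1 else 0, ?_⟩
    rw [Finset.sum_eq_single i0]
    · simp
    · intro b _ hb
      simp [hb]
    · intro h
      exact absurd hi0 h
  | zero => exact ⟨0, by simp⟩
  | add y z _ _ hy hz =>
    obtain ⟨c1, rfl⟩ := hy
    obtain ⟨c2, rfl⟩ := hz
    exact ⟨fun i => c1 i + c2 i, by rw [← Finset.sum_add_distrib]; congr 1; ext i; ring⟩
  | smul a y _ hy =>
    obtain ⟨c, rfl⟩ := hy
    refine ⟨fun i => a * c i, ?_⟩
    rw [smul_eq_mul, Finset.mul_sum]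
    congr 1; ext i; ring

/-- Key polynomial identity: `(X-1)^(p^v)` is in the span of `p^(v-i) * (X^(p^i) - 1)`. -/
lemma poly_key {p : ℕ} (hp : p.Prime) (v : ℕ) :
    ∃ c : ℕ → ℤ[X], ((X : ℤ[X]) - 1) ^ (p ^ v) =
      ∑ i ∈ Finset.range (v + 1), (p : ℤ[X]) ^ (v - i) * ((X : ℤ[X]) ^ (p ^ i) - 1) * c i := by
  induction v with
  | zero => exact ⟨fun _ => 1, by simp⟩
  | succ v IH =>
    obtain ⟨c, hc⟩ := IH
    set U : ℤ[X] := ∑ i ∈ Finset.range v, (p : ℤ[X]) ^ (v - 1 - i) * ((X : ℤ[X]) ^ (p ^ i) - 1) * c i with hU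
    set W : ℤ[X] := ((X : ℤ[X]) ^ (p ^ v) - 1) * c v with hW
    have hUW : ((X : ℤ[X]) - 1) ^ (p ^ v) = (p : ℤ[X]) * U + W := by
      rw [hc, Finset.sum_range_succ, hU, Finset.mul_sum]
      congr 1
      · apply Finset.sum_congr rfl
        intro i hi
        have hi' : i < v := Finset.mem_range.mp hi
        have : v - i = (v - 1 - i) + 1 := by omega
        rw [this, pow_succ']
        ring
      · rw [hW]
        simp
    set F : ℕ → ℤ[X] := fun i => (p : ℤ[X]) ^ (v + 1 - i) * ((X : ℤ[X]) ^ (p ^ i) - 1) with hF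
    have hmem : ((X : ℤ[X]) - 1) ^ (p ^ (v + 1)) ∈ Ideal.span (F '' ↑(Finset.range (v + 2))) := by
      have hpow : ((X : ℤ[X]) - 1) ^ (p ^ (v + 1)) = (((X : ℤ[X]) - 1) ^ (p ^ v)) ^ p := by
        rw [← pow_mul, ← pow_succ]
      rw [hpow, hUW, add_pow]
      apply Ideal.sum_mem
      intro t ht
      have ht' : t ≤ p := by simpa using Finset.mem_range_succ_iff.mp ht
      have hFv : F v = (p : ℤ[X]) * ((X : ℤ[X]) ^ (p ^ v) - 1) := by
        rw [hF]
        have : v + 1 - v = 1 := by omega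
        simp [this]
      have hFvmem : F v ∈ Ideal.span (F '' ↑(Finset.range (v + 2))) :=
        Ideal.subset_span ⟨v, by simp only [Finset.coe_range, Set.mem_Iio]; omega, rfl⟩
      have hFv1mem : F (v + 1) ∈ Ideal.span (F '' ↑(Finset.range (v + 2))) :=
        Ideal.subset_span ⟨v + 1, by simp only [Finset.coe_range, Set.mem_Iio]; omega, rfl⟩
      rcases Nat.eq_zero_or_pos t with rfl | htpos
      · -- t = 0 : term is W^p * choose
        obtain ⟨g, hg⟩ := sub_one_pow_prime hp ((X : ℤ[X]) ^ (p ^ v))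
        have hXpow : (((X : ℤ[X]) ^ (p ^ v)) ^ p) = (X : ℤ[X]) ^ (p ^ (v + 1)) := by
          rw [← pow_mul, ← pow_succ]
        have hWp : W ^ p = F (v + 1) * (c v) ^ p + F v * (g * (c v) ^ p) := by
          rw [hW, mul_pow, hg, hXpow, hFv]
          have hFv1 : F (v + 1) = ((X : ℤ[X]) ^ (p ^ (v + 1)) - 1) := by
            rw [hF]; simp
          rw [hFv1]
          ring
        simp only [pow_zero, one_mul, Nat.sub_zero, Nat.choose_zero_right, Nat.cast_one, mul_one]
        rw [hWp]
        exact Ideal.add_mem _ (Ideal.mul_mem_right _ _ hFv1mem) (Ideal.mul_mem_right _ _ hFvmem)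
      rcases eq_or_lt_of_le ht' with heqtp | htlt
      · -- t = p : term is (pU)^p * W^0 * 1
        rw [heqtp]
        have h2U : (p : ℤ[X]) ^ 2 * U ∈ Ideal.span (F '' ↑(Finset.range (v + 2))) := by
          rw [hU, Finset.mul_sum]
          apply Ideal.sum_mem
          intro i hi
          have hi' : i < v := Finset.mem_range.mp hi
          have heq : (p : ℤ[X]) ^ 2 * ((p : ℤ[X]) ^ (v - 1 - i) * ((X : ℤ[X]) ^ (p ^ i) - 1) * c i)
              = F i * c i := by
            rw [hF, ← mul_assoc, ← mul_assoc, ← pow_add]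
            have : 2 + (v - 1 - i) = v + 1 - i := by omega
            rw [this]
          rw [heq]
          exact Ideal.mul_mem_right _ _ (Ideal.subset_span ⟨i, by simp only [Finset.coe_range, Set.mem_Iio]; omega, rfl⟩)
        have hp2 : 2 ≤ p := hp.two_le
        have heq : ((p : ℤ[X]) * U) ^ p * W ^ (p - p) * ((p.choose p : ℕ) : ℤ[X])
            = (((p : ℤ[X])) ^ (p - 2) * U ^ (p - 1)) * ((p : ℤ[X]) ^ 2 * U) := by
          simp only [Nat.sub_self, pow_zero, mul_one, Nat.choose_self, Nat.cast_one]
          rw [mul_pow]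
          have h1 : (p : ℤ[X]) ^ p = (p : ℤ[X]) ^ (p - 2) * (p : ℤ[X]) ^ 2 := by
            rw [← pow_add]; congr 1; omega
          have h2 : U ^ p = U ^ (p - 1) * U := by
            rw [← pow_succ]; congr 1; omega
          rw [h1, h2]
          ring
        rw [heq]
        exact Ideal.mul_mem_left _ _ h2U
      · -- 0 < t < p
        have heq : ((p : ℤ[X]) * U) ^ t * W ^ (p - t) * (p.choose t : ℤ[X])
            = F v * ((p : ℤ[X]) ^ (t - 1) * U ^ t * c v * W ^ (p - t - 1) * (p.choose t : ℤ[X])) := by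
          rw [hFv, mul_pow]
          have h1 : (p : ℤ[X]) ^ t = (p : ℤ[X]) * (p : ℤ[X]) ^ (t - 1) := by
            rw [← pow_succ']; congr 1; omega
          have h2 : W ^ (p - t) = W * W ^ (p - t - 1) := by
            rw [← pow_succ']; congr 1; omega
          rw [h1, h2, hW]
          ring
        rw [heq]
        exact Ideal.mul_mem_right _ _ hFvmem
    obtain ⟨c', hc'⟩ := mem_span_image_finset hmem
    exact ⟨c', by simpa [hF] using hc'⟩

section Crux

lemma pact_sub_one_pow_apply {R : Type*} [CommRing R] (j : ℕ) (f : ℕ → R) :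
    pact ((X : ℤ[X]) ^ j - 1) f = fun y => f (y + j) - f y := by
  funext y
  have : ((X : ℤ[X]) ^ j - 1) = (X : ℤ[X]) ^ j - (X : ℤ[X]) ^ 0 := by simp
  rw [this]
  simp only [pact, map_sub, LinearMap.sub_apply, Pi.sub_apply]
  rw [← pact, ← pact, pact_X_pow, pact_X_pow, add_zero]

lemma fwdDiff_iter_zero_fun {R : Type*} [CommRing R] (j : ℕ) :
    (fwdDiff (1:ℕ))^[j] (0 : ℕ → R) = 0 := by
  induction j with
  | zero => rfl
  | succ j IH =>
    rw [Function.iterate_succ_apply', IH]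
    funext y
    simp [fwdDiff]

lemma crux {p e : ℕ} (hp : p.Prime) (H : ℕ → ZMod (p ^ e))
    (hH : ∀ i ≤ e, ∀ x : ℕ, ∃ c, H (x + p ^ i) - H x = (p : ZMod (p ^ e)) ^ i * c) :
    ∀ k, p ^ e ≤ k → (fwdDiff (1:ℕ))^[k] H = 0 := by
  have hq0 : ((p : ZMod (p ^ e))) ^ e = 0 := by
    rw [← Nat.cast_pow, ZMod.natCast_self]
  have base : (fwdDiff (1:ℕ))^[p ^ e] H = 0 := by
    obtain ⟨c, hc⟩ := poly_key hp e
    funext x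
    rw [← pact_fwdDiff_pow, hc, pact_sum]
    rw [Pi.zero_apply, Finset.sum_apply]
    apply Finset.sum_eq_zero
    intro i hi
    have hie : i ≤ e := by
      have := Finset.mem_range.mp hi; omega
    have hsplit : (p : ℤ[X]) ^ (e - i) * ((X : ℤ[X]) ^ (p ^ i) - 1) * c i
        = ((p ^ (e - i) : ℕ) : ℤ[X]) * (c i * ((X : ℤ[X]) ^ (p ^ i) - 1)) := by
      push_cast; ring
    rw [hsplit, pact_mul, pact_natCast, Pi.smul_apply, pact_mul]
    have hKmem : ∀ y, pact ((X : ℤ[X]) ^ (p ^ i) - 1) H y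
        ∈ Ideal.span {((p : ZMod (p ^ e))) ^ i} := by
      intro y
      rw [pact_sub_one_pow_apply]
      obtain ⟨cc, hcc⟩ := hH i hie y
      exact Ideal.mem_span_singleton'.mpr ⟨cc, by rw [mul_comm]; exact hcc.symm⟩
    have hmem := pact_preserve _ _ hKmem (c i) x
    obtain ⟨a, ha⟩ := Ideal.mem_span_singleton'.mp hmem
    rw [← ha, nsmul_eq_mul]
    push_cast
    rw [← mul_assoc, mul_comm ((p : ZMod (p^e)) ^ (e-i)) a, mul_assoc, ← pow_add]
    have : e - i + i = e := by omega
    rw [this, hq0, mul_zero]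
  intro k hk
  have hkeq : k = (k - p ^ e) + p ^ e := by omega
  rw [hkeq, Function.iterate_add_apply, base, fwdDiff_iter_zero_fun]

end Crux

section Newton

lemma newton_trunc {R : Type*} [CommRing R] (H : ℕ → R) (K : ℕ) (x : ℕ)
    (hvan : ∀ k, K ≤ k → k ≤ x → (fwdDiff (1:ℕ))^[k] H 0 = 0) :
    H x = ∑ k ∈ Finset.range K, (fwdDiff (1:ℕ))^[k] H 0 * (x.choose k : R) := by
  have hgn := shift_eq_sum_fwdDiff_iter (1:ℕ) H x 0
  simp only [smul_eq_mul, mul_one, zero_add] at hgn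
  set g : ℕ → R := fun k => (fwdDiff (1:ℕ))^[k] H 0 * (x.choose k : R) with hg
  have h1 : H x = ∑ k ∈ Finset.range (x + 1), g k := by
    rw [hgn]
    exact Finset.sum_congr rfl fun k _ => by rw [hg, nsmul_eq_mul, mul_comm]
  have h2 : ∑ k ∈ Finset.range (x + 1), g k = ∑ k ∈ Finset.range (max (x + 1) K), g k := by
    apply Finset.sum_subset (Finset.range_subset_range.mpr (le_max_left _ _))
    intro k hk hnk
    have hxk : x < k := by
      have := Finset.mem_range.not.mp hnk
      omega
    simp [hg, Nat.choose_eq_zero_of_lt hxk]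
  have h3 : ∑ k ∈ Finset.range K, g k = ∑ k ∈ Finset.range (max (x + 1) K), g k := by
    apply Finset.sum_subset (Finset.range_subset_range.mpr (le_max_right _ _))
    intro k hk hnk
    have hKk : K ≤ k := by
      have := Finset.mem_range.not.mp hnk
      omega
    have hkx : k ≤ x := by
      have hlt := Finset.mem_range.mp hk
      rcases le_or_gt (x + 1) K with h | h
      · rw [max_eq_right h] at hlt; omega
      · rw [max_eq_left (by omega)] at hlt; omega
    simp [hg, hvan k hKk hkx]
  rw [h1, h2, ← h3]

end Newton

section PerPrime

lemma ker_cast {Q d : ℕ} [NeZero Q] (h : d ∣ Q) (y : ZMod Q)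
    (hy : ZMod.castHom h (ZMod d) y = 0) : ∃ c, y = (d : ZMod Q) * c := by
  have hval : ((y.val : ℕ) : ZMod Q) = y := ZMod.natCast_rightInverse y
  have h2 : ZMod.castHom h (ZMod d) y = ((y.val : ℕ) : ZMod d) := by
    rw [← hval, map_natCast]
    rw [hval]
  rw [h2] at hy
  obtain ⟨c, hc⟩ := (ZMod.natCast_eq_zero_iff y.val d).mp hy
  refine ⟨(c : ZMod Q), ?_⟩
  rw [← hval, hc]
  push_cast
  ring

lemma perprime (n m : ℕ) (hn : 1 ≤ n) (hm : 2 ≤ m) (f : ZMod n → ZMod m)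
    (hcp : CongPres n m f) {p : ℕ} (hp : p ∈ m.primeFactors) :
    ∃ b : ℕ → ZMod (p ^ m.factorization p), ∀ x : ℕ, x < n →
      ZMod.castHom (Nat.ordProj_dvd m p) (ZMod (p ^ m.factorization p)) (f (x : ZMod n))
        = ∑ k ∈ Finset.range (mu m), b k * (x.choose k : ZMod (p ^ m.factorization p)) := by
  have hpp : p.Prime := Nat.prime_of_mem_primeFactors hp
  set e := m.factorization p with he_def
  have he : e ≠ 0 := by
    have : p ∈ (m.factorization).support := by rw [Nat.support_factorization]; exact hp
    simpa [he_def] using Finsupp.mem_support_iff.mp this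
  have hq2 : 2 ≤ p ^ e := hpp.two_le.trans (Nat.le_self_pow he p)
  haveI : NeZero (p ^ e) := ⟨by omega⟩
  have hqm : p ^ e ∣ m := Nat.ordProj_dvd m p
  have hqK : p ^ e ≤ mu m := Finset.le_sup (f := fun r => r ^ m.factorization r) hp
  set gN : ℕ → ZMod (p ^ e) := fun a => ZMod.castHom hqm (ZMod (p ^ e)) (f (a : ZMod n))
    with hgN
  by_cases hKn : n ≤ mu m
  · refine ⟨fun k => (fwdDiff (1:ℕ))^[k] gN 0, fun x hx => ?_⟩
    exact newton_trunc gN (mu m) x (fun k hk1 hk2 => by omega)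
  · push_neg at hKn
    set H : ℕ → ZMod (p ^ e) := fun y => gN (y % p ^ e) with hH
    have hhyp : ∀ i ≤ e, ∀ y : ℕ, ∃ c,
        H (y + p ^ i) - H y = (p : ZMod (p ^ e)) ^ i * c := by
      intro i hie y
      have hdq : p ^ i ∣ p ^ e := pow_dvd_pow p hie
      have hdm : p ^ i ∣ m := hdq.trans hqm
      have hmlt : ∀ z : ℕ, z % p ^ e < n := fun z =>
        lt_of_lt_of_le (Nat.mod_lt _ (by omega)) (le_of_lt (lt_of_le_of_lt hqK hKn))
      have hmod : (y + p ^ i) % p ^ e ≡ y % p ^ e [MOD p ^ i] := by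
        unfold Nat.ModEq
        rw [Nat.mod_mod_of_dvd _ hdq, Nat.mod_mod_of_dvd _ hdq, Nat.add_mod_right]
      have hcpeq := hcp (p ^ i) hdm _ _ (hmlt (y + p ^ i)) (hmlt y) hmod
      have hcomp : ∀ z : ZMod m, ZMod.castHom hdq (ZMod (p ^ i))
          (ZMod.castHom hqm (ZMod (p ^ e)) z) = ZMod.castHom hdm (ZMod (p ^ i)) z := by
        intro z
        rw [← RingHom.comp_apply, ZMod.castHom_comp]
      have h0 : ZMod.castHom hdq (ZMod (p ^ i))
          (gN ((y + p ^ i) % p ^ e) - gN (y % p ^ e)) = 0 := by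
        rw [map_sub, hgN]
        simp only []
        rw [hcomp, hcomp, hcpeq, sub_self]
      obtain ⟨c, hc⟩ := ker_cast hdq _ h0
      refine ⟨c, ?_⟩
      have : H (y + p ^ i) - H y = gN ((y + p ^ i) % p ^ e) - gN (y % p ^ e) := rfl
      rw [this, hc]
      push_cast
      ring
    have hvan := crux hpp H hhyp
    refine ⟨fun k => (fwdDiff (1:ℕ))^[k] H 0, fun x hx => ?_⟩
    have hHx : H x = gN x := by
      have hmod : x % p ^ e ≡ x [MOD p ^ e] := Nat.mod_modEq x (p ^ e)
      have hlt : x % p ^ e < n :=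
        lt_of_lt_of_le (Nat.mod_lt _ (by omega)) (le_of_lt (lt_of_le_of_lt hqK hKn))
      exact hcp (p ^ e) hqm _ _ hlt hx hmod
    have hfx : ZMod.castHom (Nat.ordProj_dvd m p) (ZMod (p ^ m.factorization p))
        (f (x : ZMod n)) = H x := hHx.symm
    rw [hfx]
    exact newton_trunc H (mu m) x
      (fun k hk1 _ => congrFun (hvan k (le_trans hqK hk1)) 0)

end PerPrime


theorem stmt_13 (n m : ℕ) (hn : 1 ≤ n) (hm : 2 ≤ m) (f : ZMod n → ZMod m)
    (hcp : CongPres n m f) :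
    ∃ p : ℕ, p < mu m ∧ ∃ a : ℕ → ZMod m,
      ∀ x : ZMod n, f x = ∑ k ∈ Finset.range (p + 1), a k * (Nat.choose x.val k : ZMod m) := by
  haveI : NeZero n := ⟨by omega⟩
  haveI : NeZero m := ⟨by omega⟩
  obtain ⟨p0, hp0⟩ := Nat.nonempty_primeFactors.mpr (show 1 < m by omega)
  have he0 : m.factorization p0 ≠ 0 := by
    have : p0 ∈ (m.factorization).support := by rw [Nat.support_factorization]; exact hp0
    simpa using Finsupp.mem_support_iff.mp this
  have hK2 : 2 ≤ mu m :=
    le_trans (Nat.prime_of_mem_primeFactors hp0).two_le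
      (le_trans (Nat.le_self_pow he0 p0)
        (Finset.le_sup (f := fun r => r ^ m.factorization r) hp0))
  refine ⟨mu m - 1, by omega, ?_⟩
  have hKsucc : mu m - 1 + 1 = mu m := by omega
  choose b hb using fun (i : m.primeFactors) => perprime n m hn hm f hcp i.2
  set a' : m.primeFactors → ℕ := fun i => (i : ℕ) ^ m.factorization (i : ℕ) with ha'
  have hcop : Pairwise (Function.onFun Nat.Coprime a') := by
    intro i j hij
    have hi := Nat.prime_of_mem_primeFactors i.2
    have hj := Nat.prime_of_mem_primeFactors j.2
    exact Nat.Coprime.pow _ _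
      ((Nat.coprime_primes hi hj).mpr (fun h => hij (Subtype.ext h)))
  have hprod : (∏ i : m.primeFactors, a' i) = m := by
    have h1 : ∏ i : m.primeFactors, a' i
        = ∏ p ∈ m.primeFactors, p ^ m.factorization p :=
      Finset.prod_coe_sort m.primeFactors (fun p => p ^ m.factorization p)
    rw [h1]
    simpa [Finsupp.prod, Nat.support_factorization] using
      Nat.factorization_prod_pow_eq_self (show m ≠ 0 by omega)
  set E0 := ZMod.prodEquivPi a' hcop with hE0
  set ψ : ZMod m →+* ZMod (∏ i : m.primeFactors, a' i) :=
    ZMod.castHom (dvd_of_eq hprod) _ with hψ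
  set χ : ZMod (∏ i : m.primeFactors, a' i) →+* ZMod m :=
    ZMod.castHom (dvd_of_eq hprod.symm) _ with hχ
  set E : ZMod m →+* ((i : m.primeFactors) → ZMod (a' i)) := E0.toRingHom.comp ψ with hE
  have hqm : ∀ i : m.primeFactors, a' i ∣ m := fun i => Nat.ordProj_dvd m i
  have hEeval : ∀ (z : ZMod m) (i : m.primeFactors),
      E z i = ZMod.castHom (hqm i) (ZMod (a' i)) z := by
    intro z i
    have hh : (Pi.evalRingHom (fun i : m.primeFactors => ZMod (a' i)) i).comp E
        = ZMod.castHom (hqm i) (ZMod (a' i)) := RingHom.ext_zmod _ _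
    exact RingHom.congr_fun hh z
  have hinj : Function.Injective E := by
    intro z w hzw
    have hid : (χ.comp (E0.symm.toRingHom.comp E)) = RingHom.id (ZMod m) :=
      RingHom.ext_zmod _ _
    have h1 := RingHom.congr_fun hid z
    have h2 := RingHom.congr_fun hid w
    simp only [RingHom.comp_apply, RingHom.id_apply] at h1 h2
    rw [← h1, ← h2, hzw]
  have hEχ : E.comp χ = E0.toRingHom := RingHom.ext_zmod _ _
  refine ⟨fun k => χ (E0.symm (fun i => b i k)), fun x => ?_⟩
  rw [hKsucc]
  apply hinj
  funext i
  rw [hEeval, hEeval]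
  have hx : ((x.val : ℕ) : ZMod n) = x := ZMod.natCast_rightInverse x
  have hlt : x.val < n := ZMod.val_lt x
  conv_lhs => rw [← hx]
  have hL : ZMod.castHom (hqm i) (ZMod (a' i)) (f ((x.val : ℕ) : ZMod n))
      = ∑ k ∈ Finset.range (mu m), b i k * ((x.val).choose k : ZMod (a' i)) :=
    hb i x.val hlt
  rw [hL, map_sum]
  apply Finset.sum_congr rfl
  intro k _
  rw [map_mul, map_natCast]
  congr 1
  rw [← hEeval]
  have h3 := RingHom.congr_fun hEχ (E0.symm (fun j => b j k))
  rw [RingHom.comp_apply] at h3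
  rw [h3]
  exact (congrFun (E0.apply_symm_apply (fun j => b j k)) i).symm
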